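/- The 4-sphere is homeomorphic to the quaternionic projective line: the unit sphere in the 5-dimensional Euclidean space EuclideanSpace ℝ (Fin 5) is homeomorphic to the projectivization ℙ(ℍ²) of the 2-dimensional quaternionic module ℍ² over the division ring ℍ of real quaternions. -/

import Mathlib

/-!
STATEMENT 0: The 4-sphere is homeomorphic to the quaternionic projective line:
the unit sphere in `EuclideanSpace ℝ (Fin 5)` is homeomorphic to the projectivization
`ℙ ℍ ℍ²` of the 2-dimensional quaternionic module `ℍ²` (with the L² norm) over the
division ring `ℍ` of real quaternions.
-/

open scoped LinearAlgebra.Projectivization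

noncomputable section

local notation "ℍ" => Quaternion ℝ

/-- `ℍ²`: the product `ℍ × ℍ` with the L² (Euclidean) norm, a left `ℍ`-module. -/
abbrev H2 : Type := WithLp 2 (ℍ × ℍ)

/-- The quotient topology on the projectivization `ℙ ℍ ℍ²`. -/
instance : TopologicalSpace (ℙ ℍ H2) :=
  inferInstanceAs (TopologicalSpace (Quotient (projectivizationSetoid ℍ H2)))


local notation "E5" => WithLp 2 (ℝ × ℍ)

instance : FiniteDimensional ℝ H2 :=
  Module.Finite.equiv (WithLp.linearEquiv 2 ℝ (ℍ × ℍ)).symm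

instance : FiniteDimensional ℝ E5 :=
  Module.Finite.equiv (WithLp.linearEquiv 2 ℝ (ℝ × ℍ)).symm


lemma finrank_E5 : Module.finrank ℝ E5 = 5 := by
  rw [(WithLp.linearEquiv 2 ℝ (ℝ × ℍ)).finrank_eq, Module.finrank_prod,
    Module.finrank_self, Quaternion.finrank_eq_four]

def isoE5 : E5 ≃ₗᵢ[ℝ] EuclideanSpace ℝ (Fin 5) :=
  ((stdOrthonormalBasis ℝ E5).repr).trans
    (LinearIsometryEquiv.piLpCongrLeft 2 ℝ ℝ (finCongr finrank_E5))

/-- A linear isometry equivalence induces a homeomorphism of unit spheres. -/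
def sphereHomeo {F G : Type*} [NormedAddCommGroup F] [NormedAddCommGroup G]
    [NormedSpace ℝ F] [NormedSpace ℝ G] (e : F ≃ₗᵢ[ℝ] G) :
    (Metric.sphere (0 : F) 1) ≃ₜ (Metric.sphere (0 : G) 1) where
  toFun x := ⟨e x, by
    have hx : ‖(x : F)‖ = 1 := by simpa using x.2
    simp [Metric.mem_sphere, dist_zero_right, e.norm_map, hx]⟩
  invFun y := ⟨e.symm y, by
    have hy : ‖(y : G)‖ = 1 := by simpa using y.2
    simp [Metric.mem_sphere, dist_zero_right, e.symm.norm_map, hy]⟩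
  left_inv x := Subtype.ext (e.symm_apply_apply x)
  right_inv y := Subtype.ext (e.apply_symm_apply y)
  continuous_toFun := by
    apply Continuous.subtype_mk
    exact e.continuous.comp continuous_subtype_val
  continuous_invFun := by
    apply Continuous.subtype_mk
    exact e.symm.continuous.comp continuous_subtype_val

def gfun (a b : ℍ) : E5 :=
  (WithLp.equiv 2 (ℝ × ℍ)).symm
    ((‖a‖^2 - ‖b‖^2) / (‖a‖^2 + ‖b‖^2), ((2 / (‖a‖^2 + ‖b‖^2)) : ℝ) • (star a * b))

lemma gfun_fst (a b : ℍ) : (gfun a b).fst = (‖a‖^2 - ‖b‖^2) / (‖a‖^2 + ‖b‖^2) := rfl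
lemma gfun_snd (a b : ℍ) : (gfun a b).snd = ((2 / (‖a‖^2 + ‖b‖^2)) : ℝ) • (star a * b) := rfl

lemma sum_sq_pos {a b : ℍ} (h : ¬(a = 0 ∧ b = 0)) : 0 < ‖a‖^2 + ‖b‖^2 := by
  rcases eq_or_ne a 0 with ha | ha
  · have hb : b ≠ 0 := fun hb => h ⟨ha, hb⟩
    have : 0 < ‖b‖^2 := pow_pos (norm_pos_iff.mpr hb) 2
    nlinarith [sq_nonneg ‖a‖]
  · have : 0 < ‖a‖^2 := pow_pos (norm_pos_iff.mpr ha) 2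
    nlinarith [sq_nonneg ‖b‖]

lemma gfun_mem_sphere {a b : ℍ} (h : ¬(a = 0 ∧ b = 0)) :
    gfun a b ∈ Metric.sphere (0 : E5) 1 := by
  have hs := sum_sq_pos h
  have hnorm : ‖gfun a b‖^2 = 1 := by
    rw [WithLp.prod_norm_sq_eq_of_L2]
    rw [gfun_fst, gfun_snd, norm_smul, norm_mul, Quaternion.norm_star]
    simp only [Real.norm_eq_abs, sq_abs, mul_pow]
    field_simp
    ring
  simp only [Metric.mem_sphere, dist_zero_right]
  nlinarith [norm_nonneg (gfun a b)]

lemma WLp_ext {α β : Type*} {p : ENNReal} {x y : WithLp p (α × β)} (h1 : x.fst = y.fst)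
    (h2 : x.snd = y.snd) : x = y :=
  WithLp.ofLp_injective p (Prod.ext h1 h2)

lemma gfun_smul {c : ℍ} (hc : c ≠ 0) (a b : ℍ) : gfun (c * a) (c * b) = gfun a b := by
  have hc2 : (0:ℝ) < ‖c‖^2 := pow_pos (norm_pos_iff.mpr hc) 2
  have hc2' : (‖c‖:ℝ)^2 ≠ 0 := ne_of_gt hc2
  have h1 : star (c * a) * (c * b) = (‖c‖^2 : ℝ) • (star a * b) := by
    rw [star_mul, mul_assoc, ← mul_assoc (star c), Quaternion.star_mul_self,
      Quaternion.coe_mul_eq_smul, mul_smul_comm, Quaternion.normSq_eq_norm_mul_self, ← sq]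
  have h2 : (gfun (c*a) (c*b)).fst = (gfun a b).fst := by
    rw [gfun_fst, gfun_fst, norm_mul, norm_mul, mul_pow, mul_pow, ← mul_sub, ← mul_add,
      mul_div_mul_left _ _ hc2']
  have h3 : (gfun (c*a) (c*b)).snd = (gfun a b).snd := by
    rw [gfun_snd, gfun_snd, norm_mul, norm_mul, mul_pow, mul_pow, ← mul_add, h1, smul_smul]
    congr 1
    rw [div_mul_eq_mul_div, mul_comm (2:ℝ), mul_div_mul_left _ _ hc2']
  exact WLp_ext h2 h3

lemma H2_ne_zero {v : H2} (hv : v ≠ 0) : ¬(v.fst = 0 ∧ v.snd = 0) := by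
  rintro ⟨h1, h2⟩
  exact hv (WLp_ext h1 h2)

def gsub (v : {w : H2 // w ≠ 0}) : Metric.sphere (0:E5) 1 :=
  ⟨gfun (v : H2).fst (v : H2).snd, gfun_mem_sphere (H2_ne_zero v.2)⟩

lemma gsub_invariant : ∀ (a b : {w : H2 // w ≠ 0}) (t : ℍ), (a : H2) = t • (b : H2) →
    gsub a = gsub b := by
  rintro ⟨v, hv⟩ ⟨w, hw⟩ t h
  simp only at h
  have ht : t ≠ 0 := by
    rintro rfl
    rw [zero_smul] at h
    exact hv h
  apply Subtype.ext
  show gfun v.fst v.snd = gfun w.fst w.snd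
  have h1 : v.fst = t * w.fst := by rw [h, WithLp.smul_fst, smul_eq_mul]
  have h2 : v.snd = t * w.snd := by rw [h, WithLp.smul_snd, smul_eq_mul]
  rw [h1, h2, gfun_smul ht]

def toSphere : ℙ ℍ H2 → Metric.sphere (0:E5) 1 :=
  Projectivization.lift gsub gsub_invariant

lemma continuous_gsub : Continuous gsub := by
  apply Continuous.subtype_mk
  have hfst : Continuous fun v : {w : H2 // w ≠ 0} => (v : H2).fst :=
    continuous_fst.comp ((WithLp.prodContinuousLinearEquiv 2 ℝ ℍ ℍ).continuous.comp
      continuous_subtype_val)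
  have hsnd : Continuous fun v : {w : H2 // w ≠ 0} => (v : H2).snd :=
    continuous_snd.comp ((WithLp.prodContinuousLinearEquiv 2 ℝ ℍ ℍ).continuous.comp
      continuous_subtype_val)
  have hne : ∀ v : {w : H2 // w ≠ 0}, ‖(v : H2).fst‖^2 + ‖(v : H2).snd‖^2 ≠ 0 :=
    fun v => ne_of_gt (sum_sq_pos (H2_ne_zero v.2))
  show Continuous fun v : {w : H2 // w ≠ 0} =>
    (WithLp.prodContinuousLinearEquiv 2 ℝ ℝ ℍ).symm
      ((‖(v : H2).fst‖^2 - ‖(v : H2).snd‖^2) / (‖(v : H2).fst‖^2 + ‖(v : H2).snd‖^2),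
        ((2 / (‖(v : H2).fst‖^2 + ‖(v : H2).snd‖^2)) : ℝ) • (star (v : H2).fst * (v : H2).snd))
  apply (WithLp.prodContinuousLinearEquiv 2 ℝ ℝ ℍ).symm.continuous.comp
  apply Continuous.prodMk
  · exact ((hfst.norm.pow 2).sub (hsnd.norm.pow 2)).div
      ((hfst.norm.pow 2).add (hsnd.norm.pow 2)) hne
  · exact (continuous_const.div ((hfst.norm.pow 2).add (hsnd.norm.pow 2)) hne).smul
      (hfst.star.mul hsnd)

lemma continuous_toSphere : Continuous toSphere :=
  continuous_quot_lift _ continuous_gsub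

lemma sphere_ne_zero {x : H2} (hx : x ∈ Metric.sphere (0 : H2) 1) : x ≠ 0 := by
  intro h
  rw [Metric.mem_sphere, dist_zero_right, h, norm_zero] at hx
  norm_num at hx

def phi (x : Metric.sphere (0 : H2) 1) : ℙ ℍ H2 :=
  Projectivization.mk ℍ (x : H2) (sphere_ne_zero x.2)

lemma continuous_phi : Continuous phi := by
  show Continuous ((Quot.mk _) ∘ (fun x : Metric.sphere (0 : H2) 1 =>
    (⟨(x : H2), sphere_ne_zero x.2⟩ : {v : H2 // v ≠ 0})))
  exact continuous_quot_mk.comp (Continuous.subtype_mk continuous_subtype_val _)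

lemma surjective_phi : Function.Surjective phi := by
  intro p
  induction p using Projectivization.ind with
  | h v hv =>
    have hn : ‖v‖ ≠ 0 := norm_ne_zero_iff.mpr hv
    refine ⟨⟨(‖v‖⁻¹ : ℝ) • v, ?_⟩, ?_⟩
    · rw [Metric.mem_sphere, dist_zero_right, norm_smul, norm_inv, norm_norm]
      field_simp
    · show Projectivization.mk ℍ ((‖v‖⁻¹ : ℝ) • v) _ = Projectivization.mk ℍ v hv
      rw [Projectivization.mk_eq_mk_iff']
      refine ⟨((‖v‖⁻¹ : ℝ) : ℍ), ?_⟩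
      have := algebraMap_smul ℍ (‖v‖⁻¹ : ℝ) v
      rwa [show (algebraMap ℝ ℍ) (‖v‖⁻¹ : ℝ) = ((‖v‖⁻¹ : ℝ) : ℍ) from rfl] at this

instance : CompactSpace (ℙ ℍ H2) := by
  constructor
  have h : Set.range phi = Set.univ := Set.range_eq_univ.mpr surjective_phi
  rw [← h]
  exact isCompact_range continuous_phi

lemma sphere_coords (x : Metric.sphere (0:E5) 1) :
    ((x:E5).fst)^2 + ‖(x:E5).snd‖^2 = 1 := by
  have hx : ‖(x:E5)‖ = 1 := by
    have := x.2
    rwa [Metric.mem_sphere, dist_zero_right] at this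
  have h2 : ‖(x:E5)‖^2 = 1 := by rw [hx]; norm_num
  rw [WithLp.prod_norm_sq_eq_of_L2] at h2
  simpa [Real.norm_eq_abs, sq_abs] using h2

lemma ne01 : (WithLp.equiv 2 (ℍ × ℍ)).symm ((0 : ℍ), (1 : ℍ)) ≠ 0 := by
  intro h
  have : ((WithLp.equiv 2 (ℍ × ℍ)).symm ((0 : ℍ), (1 : ℍ))).snd = (0 : H2).snd := by rw [h]
  rw [WithLp.equiv_symm_apply, WithLp.toLp_snd, WithLp.zero_snd] at this
  exact one_ne_zero this

lemma neA {t : ℝ} (ht : t ≠ -1) (q : ℍ) :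
    (WithLp.equiv 2 (ℍ × ℍ)).symm (((1 + t : ℝ) : ℍ), q) ≠ 0 := by
  intro h
  have : ((WithLp.equiv 2 (ℍ × ℍ)).symm (((1 + t : ℝ) : ℍ), q)).fst = (0 : H2).fst := by rw [h]
  rw [WithLp.equiv_symm_apply, WithLp.toLp_fst, WithLp.zero_fst] at this
  have h1 : ((1 + t : ℝ) : ℍ) = 0 := this
  have h2 : (1 + t : ℝ) = 0 :=
    Quaternion.coe_injective (h1.trans Quaternion.coe_zero.symm)
  exact ht (by linarith)

def hinv (x : Metric.sphere (0:E5) 1) : ℙ ℍ H2 :=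
  if h : (x:E5).fst = -1 then
    Projectivization.mk ℍ ((WithLp.equiv 2 (ℍ × ℍ)).symm ((0 : ℍ), (1 : ℍ))) ne01
  else
    Projectivization.mk ℍ
      ((WithLp.equiv 2 (ℍ × ℍ)).symm (((1 + (x:E5).fst : ℝ) : ℍ), (x:E5).snd)) (neA h _)

lemma toSphere_mk (v : H2) (hv : v ≠ 0) :
    (toSphere (Projectivization.mk ℍ v hv) : E5) = gfun v.fst v.snd := rfl

lemma hinv_toSphere (p : ℙ ℍ H2) : hinv (toSphere p) = p := by
  induction p using Projectivization.ind with
  | h v hv =>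
    by_cases ha : v.fst = 0
    · have hb : v.snd ≠ 0 := fun hb => hv (WLp_ext ha hb)
      have hbn : ‖v.snd‖^2 ≠ 0 := pow_ne_zero 2 (norm_ne_zero_iff.mpr hb)
      have ht : (toSphere (Projectivization.mk ℍ v hv) : E5).fst = -1 := by
        rw [toSphere_mk, gfun_fst, ha, norm_zero]
        rw [show ((0:ℝ)^2 : ℝ) = 0 by norm_num, zero_sub, zero_add, neg_div, div_self hbn]
      rw [hinv, dif_pos ht, Projectivization.mk_eq_mk_iff']
      refine ⟨v.snd⁻¹, ?_⟩
      refine WLp_ext ?_ ?_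
      · rw [WithLp.smul_fst, smul_eq_mul, ha, mul_zero, WithLp.equiv_symm_apply, WithLp.toLp_fst]
      · rw [WithLp.smul_snd, smul_eq_mul, inv_mul_cancel₀ hb, WithLp.equiv_symm_apply, WithLp.toLp_snd]
    · have hsn : ‖v.fst‖^2 + ‖v.snd‖^2 ≠ 0 := ne_of_gt (sum_sq_pos (H2_ne_zero hv))
      have han : (0:ℝ) < ‖v.fst‖^2 := pow_pos (norm_pos_iff.mpr ha) 2
      have ht : (toSphere (Projectivization.mk ℍ v hv) : E5).fst ≠ -1 := by
        rw [toSphere_mk, gfun_fst]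
        intro h
        rw [div_eq_iff hsn] at h
        nlinarith
      rw [hinv, dif_neg ht, Projectivization.mk_eq_mk_iff']
      refine ⟨((2/(‖v.fst‖^2 + ‖v.snd‖^2) : ℝ)) • star v.fst, ?_⟩
      refine WLp_ext ?_ ?_
      · rw [WithLp.smul_fst, smul_eq_mul, WithLp.equiv_symm_apply, WithLp.toLp_fst, smul_mul_assoc,
          Quaternion.star_mul_self, Quaternion.smul_coe, toSphere_mk, gfun_fst]
        congr 1
        rw [Quaternion.normSq_eq_norm_mul_self]
        simp only [WithLp.ofLp_fst, WithLp.ofLp_snd]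
        field_simp
        ring
      · rw [WithLp.smul_snd, smul_eq_mul, WithLp.equiv_symm_apply, WithLp.toLp_snd, smul_mul_assoc,
          toSphere_mk, gfun_snd]
        simp only [WithLp.toLp_snd, WithLp.ofLp_fst, WithLp.ofLp_snd]

lemma toSphere_hinv (x : Metric.sphere (0:E5) 1) : toSphere (hinv x) = x := by
  have hc := sphere_coords x
  by_cases ht : (x:E5).fst = -1
  · have hq : (x:E5).snd = 0 := by
      have h2 : ‖(x:E5).snd‖^2 = 0 := by rw [ht] at hc; nlinarith
      have := pow_eq_zero_iff (n := 2) (by norm_num) |>.mp h2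
      exact norm_eq_zero.mp this
    rw [hinv, dif_pos ht]
    apply Subtype.ext
    rw [toSphere_mk, WithLp.equiv_symm_apply, WithLp.toLp_fst, WithLp.toLp_snd]
    refine WLp_ext ?_ ?_
    · rw [gfun_fst, norm_zero, norm_one, ht]; norm_num
    · rw [gfun_snd, hq, star_zero, zero_mul, smul_zero]
  · have h1t : (1 + (x:E5).fst : ℝ) ≠ 0 := fun h => ht (by linarith)
    rw [hinv, dif_neg ht]
    apply Subtype.ext
    simp only [toSphere_mk, WithLp.equiv_symm_apply, WithLp.toLp_fst, WithLp.toLp_snd,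
      WithLp.ofLp_fst, WithLp.ofLp_snd]
    have hna : ‖((1 + (x:E5).fst : ℝ) : ℍ)‖^2 = (1 + (x:E5).fst)^2 := by
      rw [Quaternion.norm_coe, Real.norm_eq_abs, sq_abs]
    have hnb : ‖(x:E5).snd‖^2 = 1 - (x:E5).fst^2 := by nlinarith
    have hD : ((1 + (x:E5).fst)^2 + (1 - (x:E5).fst^2) : ℝ) = 2*(1 + (x:E5).fst) := by ring
    refine WLp_ext ?_ ?_
    · rw [gfun_fst, hna, hnb, hD]
      field_simp
      ring
    · rw [gfun_snd, hna, hnb, hD, Quaternion.star_coe, Quaternion.coe_mul_eq_smul, smul_smul]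
      have h1 : ((2/(2*(1 + (x:E5).fst))) * (1 + (x:E5).fst) : ℝ) = 1 := by
        field_simp
      rw [h1, one_smul]

def equivPS : ℙ ℍ H2 ≃ Metric.sphere (0:E5) 1 where
  toFun := toSphere
  invFun := hinv
  left_inv := hinv_toSphere
  right_inv := toSphere_hinv

def homeoPS : ℙ ℍ H2 ≃ₜ Metric.sphere (0:E5) 1 :=
  Continuous.homeoOfEquivCompactToT2 (f := equivPS) continuous_toSphere


theorem sphere4_homeomorph_quaternionic_projective_line :
    Nonempty ((Metric.sphere (0 : EuclideanSpace ℝ (Fin 5)) 1) ≃ₜ ℙ ℍ H2) := by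
  exact ⟨(sphereHomeo isoE5).symm.trans homeoPS.symm⟩
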